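/- Let G₁,…,G_s be non-trivial finite cyclic groups and let G = G₁ × ⋯ × G_s. Let L be a subgroup of G containing G² := {g² : g ∈ G}, and assume that the set A := {(g₁,…,g_s) ∈ L : gᵢ ≠ 1 for all 1 ≤ i ≤ s} is non-empty. Then G⁴ := {g⁴ : g ∈ G} is contained in the subgroup generated by A. -/

import Mathlib

/-- Key pointwise lemma: in any group, given `a ≠ 1` and `g`, there is `h` such that
both `g^2 * h^2 * a` and `g^2 * h⁻¹^2 * a⁻¹` are nontrivial. -/
lemma stmt10_aux {C : Type*} [Group C] (a : C) (ha : a ≠ 1) (g : C) :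
    ∃ h : C, g ^ 2 * h ^ 2 * a ≠ 1 ∧ g ^ 2 * h⁻¹ ^ 2 * a⁻¹ ≠ 1 := by
  by_contra hcon
  push_neg at hcon
  have h1 : g ^ 2 * g ^ 2 * a⁻¹ = 1 := by
    have := hcon g⁻¹ (by simp [inv_pow, ha])
    simpa using this
  have h2 : g ^ 2 * g ^ 2 * a = 1 := by
    by_contra h2
    have := hcon g h2
    simp [inv_pow] at this
    exact ha this
  have ha2 : a = a⁻¹ := by
    have := h1.trans h2.symm
    have := mul_left_cancel this
    exact this.symm
  have hg4 : g ^ 2 * g ^ 2 = a := by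
    rw [ha2] at h2
    exact (mul_inv_eq_one.mp (by simpa using h2))
  have hsq : a * a = 1 := by
    nth_rewrite 2 [ha2]
    simp
  have hg2 : g ^ 2 = a := by
    by_cases hx : g ^ 2 * 1 ^ 2 * a = 1
    · simp only [one_pow, mul_one] at hx
      rw [ha2]
      exact mul_eq_one_iff_eq_inv.mp hx
    · have := hcon 1 (by simpa using hx)
      simp only [one_pow, inv_one, mul_one] at this
      exact mul_inv_eq_one.mp this
  rw [hg2, hsq] at hg4
  exact ha hg4.symm

lemma stmt10_mul {C : Type*} [Group C] (hc : ∀ x y : C, x * y = y * x)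
    (X Y a : C) : (X * Y * a) * (X * Y⁻¹ * a⁻¹) = X * X := by
  letI : CommGroup C := { (inferInstance : Group C) with mul_comm := hc }
  simp [mul_assoc, mul_comm, mul_left_comm]

theorem stmt10 {s : ℕ} (G : Fin s → Type*) [∀ i, Group (G i)] [∀ i, Finite (G i)]
    [∀ i, IsCyclic (G i)] [∀ i, Nontrivial (G i)]
    (L : Subgroup (∀ i, G i)) (hL : ∀ g : ∀ i, G i, g ^ 2 ∈ L)
    (hA : ∃ g ∈ L, ∀ i, g i ≠ 1) :
    ∀ g : ∀ i, G i, g ^ 4 ∈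
      Subgroup.closure {g : ∀ i, G i | g ∈ L ∧ ∀ i, g i ≠ 1} := by
  obtain ⟨a, haL, haNe⟩ := hA
  intro g
  choose h hh1 hh2 using fun i => stmt10_aux (a i) (haNe i) (g i)
  have hc : ∀ (i : Fin s) (x y : G i), x * y = y * x := fun i =>
    letI := IsCyclic.commGroup (α := G i)
    fun x y => mul_comm x y
  set x₁ : ∀ i, G i := g ^ 2 * h ^ 2 * a with hx₁
  set x₂ : ∀ i, G i := g ^ 2 * h⁻¹ ^ 2 * a⁻¹ with hx₂
  have hx₁A : x₁ ∈ Subgroup.closure {g : ∀ i, G i | g ∈ L ∧ ∀ i, g i ≠ 1} := by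
    apply Subgroup.subset_closure
    refine ⟨L.mul_mem (L.mul_mem (hL g) (hL h)) haL, fun i => ?_⟩
    simpa [hx₁] using hh1 i
  have hx₂A : x₂ ∈ Subgroup.closure {g : ∀ i, G i | g ∈ L ∧ ∀ i, g i ≠ 1} := by
    apply Subgroup.subset_closure
    refine ⟨L.mul_mem (L.mul_mem (hL g) (hL h⁻¹)) (L.inv_mem haL), fun i => ?_⟩
    show x₂ i ≠ 1
    simp only [hx₂, Pi.mul_apply, Pi.pow_apply, Pi.inv_apply]
    exact hh2 i
  have key : g ^ 4 = x₁ * x₂ := by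
    funext i
    have := stmt10_mul (hc i) (g i ^ 2) (h i ^ 2) (a i)
    simp only [hx₁, hx₂, Pi.mul_apply, Pi.pow_apply, Pi.inv_apply]
    rw [inv_pow, this, ← pow_add]
  rw [key]
  exact mul_mem hx₁A hx₂A
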